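/- arXiv:2208.07854 — 4 statements merged into one kernel-verified Lean document; each statement's English description precedes it below -/
import Mathlib

section
/- Let (X,T) be a minimal Cantor system, C a nonempty clopen subset of X, and Q a finite clopen partition of X. Then there exists a Kakutani-Rokhlin partition P of X refining Q whose base equals C. That is, there are nonempty disjoint clopen sets C(1),…,C(I) with union C and positive integers h(1),…,h(I) such that {T^j C(i) : 1 ≤ i ≤ I, 0 ≤ j < h(i)} is a clopen partition of X refining Q. -/
open Set Filter Topology MeasureTheory

/-- A minimal homeomorphism: every two-sided orbit is dense. -/
def IsMinimal {X : Type*} [TopologicalSpace X] (T : X ≃ₜ X) : Prop :=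
  ∀ x : X, Dense (Set.range fun n : ℤ => (T.toEquiv ^ n) x)

/-- First return time of `x` to the set `A` under the map `T`. -/
noncomputable def retTime {X : Type*} (T : X → X) (A : Set X) (x : X) : ℕ :=
  sInf {n : ℕ | 0 < n ∧ T^[n] x ∈ A}

/-- `f` is a `T`-coboundary (with continuous transfer function). -/
def IsCob {X : Type*} [TopologicalSpace X] (T : X → X) (f : X → ℤ) : Prop :=
  ∃ g : X → ℤ, Continuous g ∧ ∀ x, f x = g x - g (T x)

/-- `[f]` is a nonzero positive class in `G(X,T) = C(X,ℤ)/∂_T`. -/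
def PosClass {X : Type*} [TopologicalSpace X] (T : X → X) (f : X → ℤ) : Prop :=
  ∃ u : X → ℤ, Continuous u ∧ (∀ x, 0 ≤ u x) ∧ (∃ x, u x ≠ 0) ∧
    IsCob T (fun x => f x - u x)

/-- The indicator function of a set, with values in `ℤ`. -/
noncomputable def ind {X : Type*} (A : Set X) : X → ℤ := A.indicator fun _ => 1

/-- `[f]` is a nonzero positive class in `G(X,T)/Inf`: `f` is a nonnegative nonzero
continuous function plus a function integrating to zero against every invariant measure. -/
def PosClassInf {X : Type*} [TopologicalSpace X] [MeasurableSpace X]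
    (T : X → X) (f : X → ℤ) : Prop :=
  ∃ u k : X → ℤ, Continuous u ∧ (∀ x, 0 ≤ u x) ∧ (∃ x, u x ≠ 0) ∧ Continuous k ∧
    (∀ μ : Measure X, IsProbabilityMeasure μ → Measure.map T μ = μ →
      ∫ x, (k x : ℝ) ∂μ = 0) ∧
    (∀ x, f x = u x + k x)

section
variable {X : Type*} [TopologicalSpace X]

lemma equivPow_apply (T : X ≃ₜ X) (m : ℕ) (x : X) :
    (T.toEquiv ^ m) x = (⇑T)^[m] x := by
  induction m generalizing x with
  | zero => rfl
  | succ k ih =>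
    rw [pow_succ, Equiv.Perm.mul_apply, Function.iterate_succ_apply, ih]; rfl

lemma TsymmIter (T : X ≃ₜ X) (m : ℕ) (x : X) : (⇑T)^[m] ((⇑T.symm)^[m] x) = x :=
  ((Function.LeftInverse.iterate (g := ⇑T) (f := ⇑T.symm) T.apply_symm_apply m) x)

lemma equivZpowNeg_apply (T : X ≃ₜ X) (m : ℕ) (x : X) :
    (T.toEquiv ^ (-(m:ℤ))) x = (⇑T.symm)^[m] x := by
  rw [zpow_neg]
  apply (T.toEquiv ^ (m:ℤ)).injective
  rw [← Equiv.Perm.mul_apply, mul_inv_cancel, Equiv.Perm.one_apply, zpow_natCast, equivPow_apply, TsymmIter]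

lemma equivZpow_cont (T : X ≃ₜ X) (n : ℤ) :
    Continuous fun x => (T.toEquiv ^ n) x := by
  rcases le_or_gt 0 n with h | h
  · have : (fun x => (T.toEquiv ^ n) x) = (⇑T)^[n.toNat] := by
      funext x
      rw [← equivPow_apply, ← zpow_natCast, Int.toNat_of_nonneg h]
    rw [this]; exact T.continuous.iterate _
  · have : (fun x => (T.toEquiv ^ n) x) = (⇑T.symm)^[(-n).toNat] := by
      funext x
      rw [← equivZpowNeg_apply, Int.toNat_of_nonneg (by omega), neg_neg]
    rw [this]; exact T.symm.continuous.iterate _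
end

lemma exists_hit {X : Type*} [TopologicalSpace X] [CompactSpace X] (T : X ≃ₜ X)
    (hmin : IsMinimal T) (C : Set X) (hC : IsClopen C) (hCne : C.Nonempty) :
    ∃ M : ℕ, 1 ≤ M ∧ ∀ x : X, ∃ n : ℕ, 1 ≤ n ∧ n ≤ M ∧ (⇑T)^[n] x ∈ C := by
  obtain ⟨t, ht⟩ := IsCompact.elim_finite_subcover isCompact_univ
    (fun n : ℤ => (fun x => (T.toEquiv ^ n) x) ⁻¹' C)
    (fun n => hC.isOpen.preimage (equivZpow_cont T n))
    (fun x _ => by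
      obtain ⟨y, hy, hyC⟩ := (hmin x).exists_mem_open hC.isOpen hCne
      obtain ⟨n, rfl⟩ := hy
      exact mem_iUnion.2 ⟨n, hyC⟩)
  set N := t.sup fun n => n.natAbs with hN
  refine ⟨2 * N + 1, by omega, fun x => ?_⟩
  have hx := ht (mem_univ ((⇑T)^[N + 1] x))
  simp only [mem_iUnion, mem_preimage] at hx
  obtain ⟨m, hmt, hmC⟩ := hx
  have hm : m.natAbs ≤ N := Finset.le_sup hmt
  have key : (T.toEquiv ^ (m + (N + 1 : ℕ))) x ∈ C := by
    have h1 : (⇑T)^[N + 1] x = (T.toEquiv ^ ((N + 1 : ℕ) : ℤ)) x := by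
      rw [zpow_natCast, equivPow_apply]
    rw [h1, ← Equiv.Perm.mul_apply, ← zpow_add] at hmC
    exact hmC
  refine ⟨(m + (N + 1 : ℕ)).toNat, by omega, by omega, ?_⟩
  have h2 : ((m + (N + 1 : ℕ)).toNat : ℤ) = m + (N + 1 : ℕ) := Int.toNat_of_nonneg (by omega)
  rw [← equivPow_apply, ← zpow_natCast, h2]
  exact key

section KRP
variable {X : Type*} [TopologicalSpace X] (T : X ≃ₜ X) (C : Set X) (Q : Finset (Set X))

def KRpiece (n : ℕ) (σ : Fin n → {q : Set X // q ∈ Q}) : Set X :=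
  C ∩ (⇑T)^[n] ⁻¹' C ∩ (⋂ k ∈ Finset.Ico 1 n, (⇑T)^[k] ⁻¹' Cᶜ) ∩
    ⋂ j : Fin n, (⇑T)^[(j : ℕ)] ⁻¹' (σ j : Set X)

lemma mem_KRpiece {n : ℕ} {σ : Fin n → {q : Set X // q ∈ Q}} {x : X} :
    x ∈ KRpiece T C Q n σ ↔
      x ∈ C ∧ (⇑T)^[n] x ∈ C ∧ (∀ k, 1 ≤ k → k < n → (⇑T)^[k] x ∉ C) ∧
      ∀ j : Fin n, (⇑T)^[(j : ℕ)] x ∈ (σ j : Set X) := by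
  simp only [KRpiece, mem_inter_iff, mem_preimage, mem_iInter, Finset.mem_Ico,
    mem_compl_iff, and_imp, and_assoc]

lemma isClopen_KRpiece (hC : IsClopen C) (hQ : ∀ q ∈ Q, IsClopen q)
    (n : ℕ) (σ : Fin n → {q : Set X // q ∈ Q}) : IsClopen (KRpiece T C Q n σ) := by
  have hit : ∀ k : ℕ, Continuous ((⇑T)^[k]) := fun k => T.continuous.iterate k
  refine IsClopen.inter (IsClopen.inter (IsClopen.inter hC (hC.preimage (hit n))) ?_) ?_
  · exact isClopen_biInter_finset fun k _ => hC.compl.preimage (hit k)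
  · exact isClopen_iInter_of_finite fun j => (hQ _ (σ j).2).preimage (hit j)

lemma KR_collision {n n' j j' : ℕ} {σ : Fin n → {q : Set X // q ∈ Q}}
    {σ' : Fin n' → {q : Set X // q ∈ Q}} {x y : X}
    (hx : x ∈ KRpiece T C Q n σ) (hy : y ∈ KRpiece T C Q n' σ')
    (hj : j < n) (hj' : j' < n') (hle : j ≤ j')
    (heq : (⇑T)^[j] x = (⇑T)^[j'] y) : j = j' ∧ x = y ∧ n = n' := by
  rw [mem_KRpiece] at hx hy
  have hinj : Function.Injective ((⇑T)^[j]) := T.injective.iterate j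
  have hxy : x = (⇑T)^[j' - j] y := by
    apply hinj
    rw [heq, ← Function.iterate_add_apply]
    congr 1
    omega
  rcases Nat.eq_zero_or_pos (j' - j) with h0 | hpos
  · have hxy' : x = y := by rw [hxy, h0]; rfl
    subst hxy'
    refine ⟨by omega, rfl, ?_⟩
    rcases Nat.lt_trichotomy n n' with hlt | heqn | hgt
    · exact absurd hx.2.1 (hy.2.2.1 n (by omega) hlt)
    · exact heqn
    · exact absurd hy.2.1 (hx.2.2.1 n' (by omega) hgt)
  · exfalso
    have hmem : (⇑T)^[j' - j] y ∈ C := by rw [← hxy]; exact hx.1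
    exact hy.2.2.1 (j' - j) hpos (by omega) hmem

lemma KR_sigma_eq (hQdisj : (Q : Set (Set X)).PairwiseDisjoint id) {n : ℕ}
    {σ σ' : Fin n → {q : Set X // q ∈ Q}} {x : X}
    (hx : x ∈ KRpiece T C Q n σ) (hx' : x ∈ KRpiece T C Q n σ') : σ = σ' := by
  funext j
  by_contra hne
  have h1 := (mem_KRpiece T C Q).1 hx |>.2.2.2 j
  have h2 := (mem_KRpiece T C Q).1 hx' |>.2.2.2 j
  have hne' : (σ j : Set X) ≠ (σ' j : Set X) := fun hc => hne (Subtype.ext hc)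
  have hdisj := hQdisj (Finset.mem_coe.2 (σ j).2) (Finset.mem_coe.2 (σ' j).2) hne'
  exact Set.disjoint_left.1 hdisj h1 h2
end KRP

lemma KR_index_eq {X : Type*} [TopologicalSpace X] (T : X ≃ₜ X) (C : Set X)
    (Q : Finset (Set X)) (hQdisj : (Q : Set (Set X)).PairwiseDisjoint id) {M : ℕ}
    {s s' : Σ n : Fin (M + 1), (Fin (n : ℕ) → {q : Set X // q ∈ Q})} {x : X}
    (hx : x ∈ KRpiece T C Q (s.1 : ℕ) s.2) (hx' : x ∈ KRpiece T C Q (s'.1 : ℕ) s'.2)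
    (hfst : (s.1 : ℕ) = (s'.1 : ℕ)) : s = s' := by
  obtain ⟨⟨n, hn⟩, σ⟩ := s
  obtain ⟨⟨n', hn'⟩, σ'⟩ := s'
  simp only [Fin.val_mk] at hfst hx hx'
  subst hfst
  have hσ := KR_sigma_eq T C Q hQdisj hx hx'
  subst hσ
  rfl

theorem stmt3 {X : Type*} [MetricSpace X] [CompactSpace X] [PerfectSpace X]
    [TotallyDisconnectedSpace X]
    (T : X ≃ₜ X) (hmin : IsMinimal T)
    (C : Set X) (hC : IsClopen C) (hCne : C.Nonempty)
    (Q : Finset (Set X)) (hQclopen : ∀ q ∈ Q, IsClopen q)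
    (hQcover : ⋃₀ (Q : Set (Set X)) = Set.univ)
    (hQdisj : (Q : Set (Set X)).PairwiseDisjoint id) :
    ∃ (I : ℕ) (B : Fin I → Set X) (h : Fin I → ℕ),
      (∀ i, IsClopen (B i) ∧ (B i).Nonempty ∧ 0 < h i) ∧
      (⋃ i, B i) = C ∧
      (∀ i i' : Fin I, ∀ j j' : ℕ, j < h i → j' < h i' → (i, j) ≠ (i', j') →
        Disjoint ((⇑T)^[j] '' B i) ((⇑T)^[j'] '' B i')) ∧
      (⋃ (i : Fin I), ⋃ (j : ℕ) (_ : j < h i), (⇑T)^[j] '' B i) = Set.univ ∧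
      (∀ i : Fin I, ∀ j : ℕ, j < h i → ∃ q ∈ Q, (⇑T)^[j] '' B i ⊆ q) := by
  classical
  obtain ⟨M, hM1, hit⟩ := exists_hit T hmin C hC hCne
  set ι := Σ n : Fin (M + 1), (Fin (n : ℕ) → {q : Set X // q ∈ Q}) with hι
  let P : ι → Set X := fun s => KRpiece T C Q (s.1 : ℕ) s.2
  set S : Finset ι := Finset.univ.filter (fun s => 1 ≤ (s.1 : ℕ) ∧ (P s).Nonempty) with hS
  set e := S.equivFin with he
  have hmemS : ∀ s : ι, s ∈ S ↔ 1 ≤ (s.1 : ℕ) ∧ (P s).Nonempty := by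
    intro s
    rw [hS, Finset.mem_filter]
    simp
  -- every y lies in some element of Q
  have hQmem : ∀ y : X, ∃ q : {q : Set X // q ∈ Q}, y ∈ (q : Set X) := by
    intro y
    have : y ∈ ⋃₀ (Q : Set (Set X)) := hQcover ▸ mem_univ y
    obtain ⟨q, hq, hyq⟩ := this
    exact ⟨⟨q, hq⟩, hyq⟩
  -- every point of C lies in some piece
  have build : ∀ x, x ∈ C → ∃ s : ι, 1 ≤ (s.1 : ℕ) ∧ x ∈ P s := by
    intro x hx
    have hex : ∃ n, 0 < n ∧ (⇑T)^[n] x ∈ C := by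
      obtain ⟨n0, h1, h2, h3⟩ := hit x
      exact ⟨n0, h1, h3⟩
    have hn := Nat.find_spec hex
    have hnM : Nat.find hex ≤ M := by
      obtain ⟨n0, h1, h2, h3⟩ := hit x
      exact le_trans (Nat.find_min' hex ⟨h1, h3⟩) h2
    choose σq hσq using fun j : Fin (Nat.find hex) => hQmem ((⇑T)^[(j : ℕ)] x)
    refine ⟨⟨⟨Nat.find hex, by omega⟩, σq⟩, hn.1, ?_⟩
    exact (mem_KRpiece T C Q).2
      ⟨hx, hn.2, fun k hk1 hkn hc => Nat.find_min hex hkn ⟨hk1, hc⟩, hσq⟩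
  refine ⟨S.card, fun i => P (e.symm i).1, fun i => ((e.symm i).1.1 : ℕ),
    ?_, ?_, ?_, ?_, ?_⟩
  · intro i
    have hmem := (hmemS _).1 (e.symm i).2
    exact ⟨isClopen_KRpiece T C Q hC hQclopen _ _, hmem.2, hmem.1⟩
  · apply subset_antisymm
    · refine iUnion_subset fun i x hx => ?_
      exact ((mem_KRpiece T C Q).1 hx).1
    · intro x hx
      obtain ⟨s, hs1, hsx⟩ := build x hx
      have hsS : s ∈ S := (hmemS s).2 ⟨hs1, ⟨x, hsx⟩⟩
      refine mem_iUnion.2 ⟨e ⟨s, hsS⟩, ?_⟩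
      rw [Equiv.symm_apply_apply]
      exact hsx
  · intro i i' j j' hj hj' hne
    rw [Set.disjoint_left]
    rintro z ⟨b, hb, rfl⟩ ⟨b', hb', hz⟩
    have key : j = j' ∧ b = b' ∧ ((e.symm i).1.1 : ℕ) = ((e.symm i').1.1 : ℕ) := by
      rcases le_total j j' with hle | hle
      · exact KR_collision T C Q hb hb' hj hj' hle hz.symm
      · obtain ⟨a1, a2, a3⟩ := KR_collision T C Q hb' hb hj' hj hle hz
        exact ⟨a1.symm, a2.symm, a3.symm⟩
    obtain ⟨hjj, hbb, hnn⟩ := key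
    subst hjj; subst hbb
    have hseq : (e.symm i).1 = (e.symm i').1 :=
      KR_index_eq T C Q hQdisj hb hb' hnn
    have : i = i' := e.symm.injective (Subtype.ext hseq)
    exact hne (by rw [this])
  · apply eq_univ_of_forall
    intro x
    have hexb : ∃ jj, (⇑T.symm)^[jj] x ∈ C := by
      obtain ⟨n0, h1, h2, h3⟩ := hit ((⇑T.symm)^[M] x)
      refine ⟨M - n0, ?_⟩
      have hsplit : (⇑T.symm)^[M] x = (⇑T.symm)^[n0] ((⇑T.symm)^[M - n0] x) := by
        rw [← Function.iterate_add_apply]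
        congr 1
        omega
      rw [hsplit, TsymmIter] at h3
      exact h3
    have hjC := Nat.find_spec hexb
    set j := Nat.find hexb with hjdef
    set b := (⇑T.symm)^[j] x with hbdef
    have hxb : (⇑T)^[j] b = x := TsymmIter T j x
    obtain ⟨s, hs1, hsx⟩ := build b hjC
    have hjn : j < (s.1 : ℕ) := by
      by_contra hcon
      push_neg at hcon
      have hmem := ((mem_KRpiece T C Q).1 hsx).2.1
      have hsplit : b = (⇑T.symm)^[(s.1 : ℕ)] ((⇑T.symm)^[j - (s.1 : ℕ)] x) := by
        rw [hbdef, ← Function.iterate_add_apply]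
        congr 1
        omega
      rw [hsplit, TsymmIter] at hmem
      exact Nat.find_min hexb (by omega) hmem
    have hsS : s ∈ S := (hmemS s).2 ⟨hs1, ⟨b, hsx⟩⟩
    refine mem_iUnion.2 ⟨e ⟨s, hsS⟩, mem_iUnion.2 ⟨j, mem_iUnion.2 ⟨?_, ?_⟩⟩⟩
    · simp only [Equiv.symm_apply_apply]
      exact hjn
    · simp only [Equiv.symm_apply_apply]
      exact ⟨b, hsx, hxb⟩
  · intro i j hj
    refine ⟨((e.symm i).1.2 ⟨j, hj⟩ : Set X), ((e.symm i).1.2 ⟨j, hj⟩).2, ?_⟩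
    rintro z ⟨b, hb, rfl⟩
    exact ((mem_KRpiece T C Q).1 hb).2.2.2 ⟨j, hj⟩
end

section
/- Let (X,T) be a minimal Cantor system and f ∈ C(X,ℤ). Then the class [f] is strictly positive in G(X,T) (i.e., f equals a nonnegative nonzero continuous integer function plus a coboundary) if and only if there is a nonempty clopen set A ⊆ X such that for all x ∈ A, Σ_{j=0}^{r_A(x)-1} f(T^j x) > 0. -/
open Set Filter Topology MeasureTheory

section Stmt5Aux

variable {X : Type*} [MetricSpace X] [CompactSpace X]

lemma coe_zpow_nat (T : X ≃ₜ X) (n : ℕ) (x : X) :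
    (T.toEquiv ^ (n : ℤ)) x = (⇑T)^[n] x := by
  rw [zpow_natCast, ← Equiv.Perm.iterate_eq_pow]; rfl

lemma coe_zpow_neg (T : X ≃ₜ X) (n : ℕ) (x : X) :
    (T.toEquiv ^ (-(n : ℤ))) x = (⇑T.symm)^[n] x := by
  rw [zpow_neg, zpow_natCast, ← inv_pow, ← Equiv.Perm.iterate_eq_pow]; rfl

lemma hitting (T : X ≃ₜ X) (hmin : IsMinimal T) {A : Set X} (hA : IsOpen A)
    (hAne : A.Nonempty) (x : X) : ∃ n : ℕ, 0 < n ∧ (⇑T)^[n] x ∈ A := by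
  set C : ℕ → Set X := fun N => closure (Set.range fun n : ℕ => (⇑T)^[N + n] x) with hC
  have hmono : ∀ N, C (N + 1) ⊆ C N := by
    intro N
    apply closure_mono
    rintro _ ⟨n, rfl⟩
    exact ⟨n + 1, show (⇑T)^[N + (n + 1)] x = (⇑T)^[N + 1 + n] x by
      rw [show N + (n + 1) = N + 1 + n by ring]⟩
  have hcl : ∀ N, IsClosed (C N) := fun N => isClosed_closure
  have hne : ∀ N, (C N).Nonempty := fun N => (Set.range_nonempty _).closure
  obtain ⟨y, hy⟩ := IsCompact.nonempty_iInter_of_sequence_nonempty_isCompact_isClosed C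
    hmono hne (hcl 0).isCompact hcl
  have himg : ∀ N, T '' C N = C (N + 1) := by
    intro N
    show T '' closure _ = closure _
    rw [Homeomorph.image_closure, ← Set.range_comp]
    refine congrArg closure (congrArg Set.range (funext fun n => ?_))
    show T ((⇑T)^[N + n] x) = (⇑T)^[N + 1 + n] x
    exact (Function.iterate_succ_apply' (⇑T) (N + n) x).symm.trans
      (by rw [show (N + n).succ = N + 1 + n by omega])
  set Ω := ⋂ N, C N with hΩ
  have hTΩ : T '' Ω = Ω := by
    rw [hΩ, Set.image_iInter T.bijective]
    simp_rw [himg]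
    apply Set.Subset.antisymm
    · intro z hz
      rw [Set.mem_iInter] at hz ⊢
      exact fun N => hmono N (hz N)
    · intro z hz
      rw [Set.mem_iInter] at hz ⊢
      exact fun N => hz (N + 1)
  have hmemT : ∀ z ∈ Ω, T z ∈ Ω := fun z hz => hTΩ ▸ Set.mem_image_of_mem T hz
  have hmemS : ∀ z ∈ Ω, T.symm z ∈ Ω := by
    intro z hz
    rw [← hTΩ] at hz
    obtain ⟨w, hw, rfl⟩ := hz
    simpa using hw
  have hiterT : ∀ k : ℕ, (⇑T)^[k] y ∈ Ω := by
    intro k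
    induction k with
    | zero => exact hy
    | succ k ih => rw [Function.iterate_succ_apply']; exact hmemT _ ih
  have hiterS : ∀ k : ℕ, (⇑T.symm)^[k] y ∈ Ω := by
    intro k
    induction k with
    | zero => exact hy
    | succ k ih => rw [Function.iterate_succ_apply']; exact hmemS _ ih
  have horb : Set.range (fun n : ℤ => (T.toEquiv ^ n) y) ⊆ Ω := by
    rintro _ ⟨n, rfl⟩
    cases n with
    | ofNat k =>
        show (T.toEquiv ^ ((k : ℕ) : ℤ)) y ∈ Ω
        rw [coe_zpow_nat]; exact hiterT k
    | negSucc k =>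
        show (T.toEquiv ^ (Int.negSucc k)) y ∈ Ω
        rw [show Int.negSucc k = -((k + 1 : ℕ) : ℤ) from rfl, coe_zpow_neg]
        exact hiterS (k + 1)
  have hΩuniv : Ω = Set.univ := by
    apply Set.eq_univ_of_univ_subset
    calc (Set.univ : Set X) = closure (Set.range fun n : ℤ => (T.toEquiv ^ n) y) :=
          (hmin y).closure_eq.symm
      _ ⊆ Ω := closure_minimal horb (isClosed_iInter hcl)
  have hdense : Dense (Set.range fun n : ℕ => (⇑T)^[1 + n] x) := by
    rw [dense_iff_closure_eq]
    apply Set.eq_univ_of_univ_subset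
    rw [← hΩuniv]
    exact Set.iInter_subset C 1
  obtain ⟨z, ⟨n, rfl⟩, hzA⟩ := hdense.exists_mem_open hA hAne
  exact ⟨1 + n, by omega, hzA⟩

lemma isMinimal_symm (T : X ≃ₜ X) (hmin : IsMinimal T) : IsMinimal T.symm := by
  intro x
  have hkey : ∀ n : ℤ, (T.symm.toEquiv ^ n) x = (T.toEquiv ^ (-n)) x := by
    intro n
    have h1 : T.symm.toEquiv = T.toEquiv⁻¹ := rfl
    rw [h1, inv_zpow, ← zpow_neg]
  have : (Set.range fun n : ℤ => (T.symm.toEquiv ^ n) x)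
      = Set.range fun n : ℤ => (T.toEquiv ^ n) x := by
    ext z
    constructor
    · rintro ⟨n, rfl⟩
      refine ⟨-n, ?_⟩
      show (T.toEquiv ^ (-n)) x = (T.symm.toEquiv ^ n) x
      exact (hkey n).symm
    · rintro ⟨n, rfl⟩
      refine ⟨-n, ?_⟩
      show (T.symm.toEquiv ^ (-n)) x = (T.toEquiv ^ n) x
      rw [hkey, neg_neg]
  rw [this]
  exact hmin x

lemma bounded_hitting (T : X ≃ₜ X) (hmin : IsMinimal T) {A : Set X} (hA : IsOpen A)
    (hAne : A.Nonempty) : ∃ N : ℕ, ∀ x : X, ∃ n : ℕ, n < N ∧ (⇑T)^[n] x ∈ A := by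
  have hcov : (Set.univ : Set X) ⊆ ⋃ n : ℕ, (⇑T)^[n + 1] ⁻¹' A := by
    intro x _
    obtain ⟨n, hn, hmem⟩ := hitting T hmin hA hAne x
    exact Set.mem_iUnion.2 ⟨n - 1, by simpa [Nat.sub_add_cancel hn] using hmem⟩
  obtain ⟨t, ht⟩ := isCompact_univ.elim_finite_subcover _
    (fun n : ℕ => (T.continuous.iterate (n + 1)).isOpen_preimage A hA) hcov
  refine ⟨t.sup id + 2, fun x => ?_⟩
  obtain ⟨i, hi, hx⟩ := Set.mem_iUnion₂.1 (ht (Set.mem_univ x))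
  exact ⟨i + 1, by have := Finset.le_sup (f := id) hi; simp only [id] at this; omega, hx⟩

lemma no_periodic [PerfectSpace X] (T : X ≃ₜ X) (hmin : IsMinimal T) (x : X) {n : ℕ}
    (hn : 0 < n) : (⇑T)^[n] x ≠ x := by
  intro h
  have hfix : Function.IsFixedPt (⇑(T.toEquiv ^ (n : ℤ))) x := by
    show (T.toEquiv ^ (n : ℤ)) x = x
    rw [coe_zpow_nat]; exact h
  have hsub : (Set.range fun m : ℤ => (T.toEquiv ^ m) x)
      ⊆ (fun j : ℕ => (⇑T)^[j] x) '' (Set.Iio n) := by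
    rintro _ ⟨m, rfl⟩
    have hmod : 0 ≤ m % n := Int.emod_nonneg m (by exact_mod_cast hn.ne')
    have hlt : m % n < n := Int.emod_lt_of_pos m (by exact_mod_cast hn)
    refine ⟨(m % n).toNat, by simp only [Set.mem_Iio]; omega, ?_⟩
    have hdecomp : m = m % n + (n : ℤ) * (m / n) := by
      rw [add_comm]; exact (Int.mul_ediv_add_emod m n).symm
    have hfix2 : Function.IsFixedPt (⇑(T.toEquiv ^ ((n : ℤ) * (m / n)))) x := by
      rw [zpow_mul]
      exact hfix.perm_zpow (m / n)
    show (⇑T)^[(m % n).toNat] x = (T.toEquiv ^ m) x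
    conv_rhs => rw [hdecomp]
    rw [zpow_add]
    show (⇑T)^[(m % n).toNat] x = (T.toEquiv ^ (m % n)) ((T.toEquiv ^ ((n : ℤ) * (m / n))) x)
    rw [hfix2]
    have hc := coe_zpow_nat T (m % (n : ℤ)).toNat x
    rw [show (((m % (n : ℤ)).toNat : ℕ) : ℤ) = m % n by omega] at hc
    exact hc.symm
  have hfin : (Set.univ : Set X).Finite := by
    have hS : ((fun j : ℕ => (⇑T)^[j] x) '' (Set.Iio n)).Finite :=
      (Set.finite_Iio n).image _
    have : (Set.univ : Set X) ⊆ (fun j : ℕ => (⇑T)^[j] x) '' (Set.Iio n) := by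
      calc (Set.univ : Set X) = closure (Set.range fun m : ℤ => (T.toEquiv ^ m) x) :=
            (hmin x).closure_eq.symm
        _ ⊆ closure ((fun j : ℕ => (⇑T)^[j] x) '' (Set.Iio n)) := closure_mono hsub
        _ = _ := hS.isClosed.closure_eq
    exact hS.subset this
  haveI : Finite X := Set.finite_univ_iff.1 hfin
  haveI : DiscreteTopology X := by infer_instance
  have hacc := PerfectSpace.univ_preperfect (α := X) x (Set.mem_univ x)
  rw [accPt_iff_nhds] at hacc
  obtain ⟨y, hy, hyx⟩ := hacc {x} ((isOpen_discrete {x}).mem_nhds rfl)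
  exact hyx hy.1

lemma telescope (T : X → X) (g : X → ℤ) (n : ℕ) (x : X) :
    ∑ j ∈ Finset.range n, (g (T^[j] x) - g (T^[j + 1] x)) = g x - g (T^[n] x) := by
  simpa using Finset.sum_range_sub' (fun j => g (T^[j] x)) n

lemma count_visits (T : X ≃ₜ X) (u : X → ℤ) (hu : ∀ x, 0 ≤ u x) {N : ℕ}
    (hN : ∀ y : X, ∃ n : ℕ, n < N ∧ u ((⇑T)^[n] y) ≠ 0) :
    ∀ (m : ℕ) (y : X), (m : ℤ) ≤ ∑ j ∈ Finset.range (m * N), u ((⇑T)^[j] y) := by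
  intro m
  induction m with
  | zero => simp
  | succ m ih =>
    intro y
    have hsplit : ∑ j ∈ Finset.range ((m + 1) * N), u ((⇑T)^[j] y)
        = ∑ j ∈ Finset.range N, u ((⇑T)^[j] y)
          + ∑ j ∈ Finset.range (m * N), u ((⇑T)^[j] ((⇑T)^[N] y)) := by
      rw [show (m + 1) * N = N + m * N by ring, Finset.sum_range_add]
      congr 1
      refine Finset.sum_congr rfl fun j _ => ?_
      rw [show N + j = j + N by ring, Function.iterate_add_apply]
    obtain ⟨n, hn, hmem⟩ := hN y
    have h1 : 1 ≤ ∑ j ∈ Finset.range N, u ((⇑T)^[j] y) := by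
      have hle : u ((⇑T)^[n] y) ≤ ∑ j ∈ Finset.range N, u ((⇑T)^[j] y) :=
        Finset.single_le_sum (fun i _ => hu _) (Finset.mem_range.2 hn)
      have := hu ((⇑T)^[n] y)
      omega
    have h2 := ih ((⇑T)^[N] y)
    rw [hsplit]
    push_cast
    omega

lemma iter_cancel (T : X ≃ₜ X) (i j : ℕ) (y : X) :
    (⇑T)^[i] ((⇑T.symm)^[i + j] y) = (⇑T.symm)^[j] y := by
  rw [Function.iterate_add_apply]
  exact (Function.LeftInverse.iterate (fun z => T.apply_symm_apply z) i) _

lemma retTime_pos_mem (T : X → X) (A : Set X) (x : X)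
    (hne : ∃ n : ℕ, 0 < n ∧ T^[n] x ∈ A) :
    0 < retTime T A x ∧ T^[retTime T A x] x ∈ A ∧
      ∀ k, 0 < k → k < retTime T A x → T^[k] x ∉ A := by
  have hmem := Nat.sInf_mem hne
  refine ⟨hmem.1, hmem.2, fun k hk1 hk2 hkA => ?_⟩
  have hle : retTime T A x ≤ k :=
    Nat.sInf_le (show k ∈ {n : ℕ | 0 < n ∧ T^[n] x ∈ A} from ⟨hk1, hkA⟩)
  omega

lemma forward_dir [PerfectSpace X] [TotallyDisconnectedSpace X]
    (T : X ≃ₜ X) (hmin : IsMinimal T) (f : X → ℤ)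
    (hpos : PosClass (⇑T) f) :
    ∃ A : Set X, IsClopen A ∧ A.Nonempty ∧
      ∀ x ∈ A, 0 < ∑ j ∈ Finset.range (retTime (⇑T) A x), f ((⇑T)^[j] x) := by
  obtain ⟨u, hu_cont, hu_nonneg, ⟨x₁, hx₁⟩, g, hg_cont, hcob⟩ := hpos
  set U : Set X := {x | u x ≠ 0} with hU
  have hUopen : IsOpen U := by
    have h : U = u ⁻¹' ({0}ᶜ) := rfl
    rw [h]; exact (isOpen_discrete _).preimage hu_cont
  obtain ⟨N, hN⟩ := bounded_hitting T hmin hUopen ⟨x₁, hx₁⟩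
  obtain ⟨M, hM⟩ : ∃ M : ℕ, ∀ x : X, |g x| ≤ M := by
    have hc : Continuous fun x : X => |g x| :=
      (continuous_of_discreteTopology (f := fun m : ℤ => |m|)).comp hg_cont
    obtain ⟨x₀, -, hx₀⟩ := IsCompact.exists_isMaxOn (isCompact_univ (X := X))
      ⟨x₁, Set.mem_univ x₁⟩ hc.continuousOn
    exact ⟨(|g x₀|).toNat, fun x => le_trans (hx₀ (Set.mem_univ x)) (Int.self_le_toNat _)⟩
  set K := (2 * M + 1) * N + 1 with hK
  haveI : TotallySeparatedSpace X := loc_compact_t2_tot_disc_iff_tot_sep.mp ‹_›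
  have hsep : ∀ k : ℕ, ∃ V : Set X, IsClopen V ∧ x₁ ∈ V ∧
      (1 ≤ k ∧ k ≤ K → (⇑T)^[k] x₁ ∉ V) := by
    intro k
    by_cases hk : 1 ≤ k ∧ k ≤ K
    · have hne : x₁ ≠ (⇑T)^[k] x₁ := (no_periodic T hmin x₁ (by omega)).symm
      obtain ⟨V, hV, hxV, hTV⟩ := exists_isClopen_of_totally_separated hne
      exact ⟨V, hV, hxV, fun _ => hTV⟩
    · exact ⟨Set.univ, isClopen_univ, Set.mem_univ _, fun h => absurd h hk⟩
  choose V hVc hxV hTV using hsep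
  set A : Set X := ⋂ k ∈ Finset.Icc 1 K, (V k ∩ (⇑T)^[k] ⁻¹' (V k)ᶜ) with hA
  have hAclopen : IsClopen A :=
    isClopen_biInter_finset fun k _ =>
      (hVc k).inter (((hVc k).compl).preimage (T.continuous.iterate k))
  have hx₁A : x₁ ∈ A := by
    rw [hA, Set.mem_iInter₂]
    intro k hk
    rw [Finset.mem_Icc] at hk
    exact ⟨hxV k, hTV k hk⟩
  have hAsub : ∀ k, 1 ≤ k → k ≤ K → A ⊆ V k ∩ (⇑T)^[k] ⁻¹' (V k)ᶜ := by
    intro k h1 h2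
    rw [hA]
    exact Set.biInter_subset_of_mem (Finset.mem_Icc.2 ⟨h1, h2⟩)
  have hAret : ∀ y ∈ A, ∀ k, 1 ≤ k → k ≤ K → (⇑T)^[k] y ∉ A := by
    intro y hy k h1 h2 hmem
    have hy' := hAsub k h1 h2 hy
    have hmem' := hAsub k h1 h2 hmem
    exact hy'.2 hmem'.1
  refine ⟨A, hAclopen, ⟨x₁, hx₁A⟩, fun x hx => ?_⟩
  have hhit := hitting T hmin hAclopen.isOpen ⟨x₁, hx₁A⟩ x
  obtain ⟨hr_pos, hrA, hrmin⟩ := retTime_pos_mem (⇑T) A x hhit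
  set r := retTime (⇑T) A x with hr
  have hrK : K < r := by
    by_contra hcon
    exact hAret x hx r hr_pos (by omega) hrA
  have hsum : ∀ j : ℕ, f ((⇑T)^[j] x)
      = u ((⇑T)^[j] x) + (g ((⇑T)^[j] x) - g ((⇑T)^[j + 1] x)) := by
    intro j
    have h1 := hcob ((⇑T)^[j] x)
    simp only at h1
    rw [Function.iterate_succ_apply']
    omega
  have hcalc : ∑ j ∈ Finset.range r, f ((⇑T)^[j] x)
      = (∑ j ∈ Finset.range r, u ((⇑T)^[j] x)) + (g x - g ((⇑T)^[r] x)) := by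
    calc ∑ j ∈ Finset.range r, f ((⇑T)^[j] x)
        = ∑ j ∈ Finset.range r,
            (u ((⇑T)^[j] x) + (g ((⇑T)^[j] x) - g ((⇑T)^[j + 1] x))) :=
          Finset.sum_congr rfl fun j _ => hsum j
      _ = (∑ j ∈ Finset.range r, u ((⇑T)^[j] x))
            + ∑ j ∈ Finset.range r, (g ((⇑T)^[j] x) - g ((⇑T)^[j + 1] x)) :=
          Finset.sum_add_distrib
      _ = _ := by rw [telescope (⇑T) g r x]
  have hvis := count_visits T u hu_nonneg (N := N)
    (fun y => by
      obtain ⟨n, h1, h2⟩ := hN y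
      exact ⟨n, h1, h2⟩) (2 * M + 1) x
  have hmono : ∑ j ∈ Finset.range ((2 * M + 1) * N), u ((⇑T)^[j] x)
      ≤ ∑ j ∈ Finset.range r, u ((⇑T)^[j] x) :=
    Finset.sum_le_sum_of_subset_of_nonneg
      (Finset.range_subset_range.2 (by omega)) (fun i _ _ => hu_nonneg _)
  have hgx := abs_le.1 (hM x)
  have hgr := abs_le.1 (hM ((⇑T)^[r] x))
  have : (2 * (M : ℤ) + 1) ≤ ∑ j ∈ Finset.range r, u ((⇑T)^[j] x) := by
    refine le_trans ?_ hmono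
    have := hvis
    push_cast at this ⊢
    omega
  omega

noncomputable def Sfun (T : X ≃ₜ X) (A : Set X) (f : X → ℤ) (x : X) : ℤ :=
  ∑ j ∈ Finset.range (retTime (⇑T) A x), f ((⇑T)^[j] x)

noncomputable def ufun (T : X ≃ₜ X) (A : Set X) (f : X → ℤ) : X → ℤ :=
  A.indicator (Sfun T A f)

noncomputable def bfun (T : X ≃ₜ X) (A : Set X) (y : X) : ℕ :=
  sInf {j : ℕ | (⇑T.symm)^[j] y ∈ A}

noncomputable def gfun (T : X ≃ₜ X) (A : Set X) (f : X → ℤ) (y : X) : ℤ :=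
  ∑ i ∈ Finset.range (bfun T A y),
    (ufun T A f ((⇑T)^[i] ((⇑T.symm)^[bfun T A y] y))
      - f ((⇑T)^[i] ((⇑T.symm)^[bfun T A y] y)))

lemma iter_cancel' (T : X ≃ₜ X) (i jj : ℕ) (h : i ≤ jj) (z : X) :
    (⇑T)^[i] ((⇑T.symm)^[jj] z) = (⇑T.symm)^[jj - i] z := by
  have h2 := iter_cancel T i (jj - i) z
  rwa [show i + (jj - i) = jj by omega] at h2

lemma r_eq (T : X ≃ₜ X) (A : Set X) (x : X) (n : ℕ) (hn : 0 < n)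
    (hmem : (⇑T)^[n] x ∈ A)
    (hnot : ∀ k, 0 < k → k < n → (⇑T)^[k] x ∉ A) : retTime (⇑T) A x = n := by
  have hfacts := retTime_pos_mem (⇑T) A x ⟨n, hn, hmem⟩
  have hle : retTime (⇑T) A x ≤ n :=
    Nat.sInf_le (show n ∈ {m : ℕ | 0 < m ∧ (⇑T)^[m] x ∈ A} from ⟨hn, hmem⟩)
  by_contra hne
  exact hnot _ hfacts.1 (by omega) hfacts.2.1

lemma b_eq (T : X ≃ₜ X) (A : Set X) (y : X) (n : ℕ)
    (hmem : (⇑T.symm)^[n] y ∈ A)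
    (hnot : ∀ j < n, (⇑T.symm)^[j] y ∉ A) : bfun T A y = n := by
  have hle : bfun T A y ≤ n :=
    Nat.sInf_le (show n ∈ {j : ℕ | (⇑T.symm)^[j] y ∈ A} from hmem)
  have hmem' := Nat.sInf_mem
    (⟨n, hmem⟩ : ∃ j, j ∈ {j : ℕ | (⇑T.symm)^[j] y ∈ A})
  have hd : bfun T A y = sInf {j : ℕ | (⇑T.symm)^[j] y ∈ A} := rfl
  by_contra hne
  exact hnot _ (by omega) (hd ▸ hmem')

lemma b_spec (T : X ≃ₜ X) (A : Set X) (y : X)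
    (hb : ∃ j : ℕ, (⇑T.symm)^[j] y ∈ A) :
    (⇑T.symm)^[bfun T A y] y ∈ A ∧ ∀ j < bfun T A y, (⇑T.symm)^[j] y ∉ A := by
  have hmem := Nat.sInf_mem hb
  have hd : bfun T A y = sInf {j : ℕ | (⇑T.symm)^[j] y ∈ A} := rfl
  refine ⟨hd ▸ hmem, fun j hj hjA => ?_⟩
  have hle := Nat.sInf_le (show j ∈ {j : ℕ | (⇑T.symm)^[j] y ∈ A} from hjA)
  omega

lemma Sfun_def (T : X ≃ₜ X) (A : Set X) (f : X → ℤ) (x : X) :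
    Sfun T A f x = ∑ j ∈ Finset.range (retTime (⇑T) A x), f ((⇑T)^[j] x) := rfl

lemma gfun_def (T : X ≃ₜ X) (A : Set X) (f : X → ℤ) (y : X) :
    gfun T A f y = ∑ i ∈ Finset.range (bfun T A y),
      (ufun T A f ((⇑T)^[i] ((⇑T.symm)^[bfun T A y] y))
        - f ((⇑T)^[i] ((⇑T.symm)^[bfun T A y] y))) := rfl

lemma cob_key (T : X ≃ₜ X) (hmin : IsMinimal T) {A : Set X} (hAc : IsClopen A)
    (hAne : A.Nonempty) (f : X → ℤ) (y : X) :
    f y - ufun T A f y = gfun T A f y - gfun T A f (T y) := by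
  have hbhit : ∀ z : X, ∃ j : ℕ, (⇑T.symm)^[j] z ∈ A := fun z => by
    obtain ⟨n, -, hn⟩ := hitting T.symm (isMinimal_symm T hmin) hAc.isOpen hAne z
    exact ⟨n, hn⟩
  obtain ⟨hbA, hbnot⟩ := b_spec T A y (hbhit y)
  set j := bfun T A y with hj
  have hyx₀ : (⇑T)^[j] ((⇑T.symm)^[j] y) = y := by
    have h := iter_cancel' T j j le_rfl y
    simpa using h
  by_cases hTy : T y ∈ A
  · have hbTy : bfun T A (T y) = 0 :=
      b_eq T A (T y) 0 (by simpa using hTy) (fun k hk => absurd hk (Nat.not_lt_zero k))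
    have hgTy : gfun T A f (T y) = 0 := by
      rw [gfun_def, hbTy]
      simp
    have hrx₀ : retTime (⇑T) A ((⇑T.symm)^[j] y) = j + 1 := by
      apply r_eq
      · omega
      · rw [Function.iterate_succ_apply', hyx₀]; exact hTy
      · intro k hk1 hk2
        rw [iter_cancel' T k j (by omega) y]
        exact hbnot (j - k) (by omega)
    rcases Nat.eq_zero_or_pos j with hj0 | hjpos
    · have hyA : y ∈ A := by
        rw [hj0] at hbA
        simpa using hbA
      have hgy : gfun T A f y = 0 := by
        rw [gfun_def, ← hj, hj0]
        simp
      have hry : retTime (⇑T) A y = 1 := by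
        rw [hj0] at hrx₀
        simpa using hrx₀
      have huy : ufun T A f y = f y := by
        show A.indicator (Sfun T A f) y = f y
        rw [Set.indicator_of_mem hyA, Sfun_def, hry]
        simp
      rw [hgy, hgTy, huy]
      ring
    · have hyA : y ∉ A := by
        have h := hbnot 0 hjpos
        simpa using h
      have huy : ufun T A f y = 0 := Set.indicator_of_notMem hyA _
      have husum : ∑ i ∈ Finset.range j, ufun T A f ((⇑T)^[i] ((⇑T.symm)^[j] y))
          = Sfun T A f ((⇑T.symm)^[j] y) := by
        rw [Finset.sum_eq_single_of_mem 0 (Finset.mem_range.2 hjpos)]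
        · show ufun T A f ((⇑T)^[0] ((⇑T.symm)^[j] y)) = _
          rw [Function.iterate_zero_apply]
          exact Set.indicator_of_mem hbA _
        · intro i hi hne
          rw [Finset.mem_range] at hi
          show ufun T A f ((⇑T)^[i] ((⇑T.symm)^[j] y)) = 0
          rw [iter_cancel' T i j (by omega) y]
          exact Set.indicator_of_notMem (hbnot (j - i) (by omega)) _
      have hSx₀ : Sfun T A f ((⇑T.symm)^[j] y)
          = ∑ i ∈ Finset.range (j + 1), f ((⇑T)^[i] ((⇑T.symm)^[j] y)) := by
        rw [Sfun_def, hrx₀]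
      have hgy : gfun T A f y = f y := by
        rw [gfun_def, ← hj, Finset.sum_sub_distrib, husum, hSx₀, Finset.sum_range_succ,
          hyx₀]
        ring
      rw [hgy, hgTy, huy]
  · have hbTy : bfun T A (T y) = j + 1 := by
      apply b_eq
      · rw [Function.iterate_succ_apply, T.symm_apply_apply]
        exact hbA
      · intro k hk
        cases k with
        | zero => simpa using hTy
        | succ k' =>
          rw [Function.iterate_succ_apply, T.symm_apply_apply]
          exact hbnot k' (by omega)
    have hgTy : gfun T A f (T y) = gfun T A f y + (ufun T A f y - f y) := by
      rw [gfun_def, hbTy, Function.iterate_succ_apply, T.symm_apply_apply,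
        Finset.sum_range_succ, hyx₀, gfun_def, ← hj]
    rw [hgTy]
    ring

lemma ufun_cont (T : X ≃ₜ X) (hmin : IsMinimal T) {A : Set X} (hAc : IsClopen A)
    (hAne : A.Nonempty) (f : X → ℤ) (hf : Continuous f) :
    Continuous (ufun T A f) := by
  apply IsLocallyConstant.continuous
  rw [IsLocallyConstant.iff_exists_open]
  intro x
  by_cases hx : x ∈ A
  · have hhit := hitting T hmin hAc.isOpen hAne x
    obtain ⟨hr1, hr2, hr3⟩ := retTime_pos_mem (⇑T) A x hhit
    set n := retTime (⇑T) A x with hn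
    refine ⟨A ∩ (⋂ k ∈ Finset.Ico 1 n, (⇑T)^[k] ⁻¹' Aᶜ) ∩ ((⇑T)^[n] ⁻¹' A)
      ∩ ⋂ i ∈ Finset.range n, (fun y => f ((⇑T)^[i] y)) ⁻¹' {f ((⇑T)^[i] x)},
      ?_, ?_, ?_⟩
    · refine IsOpen.inter (IsOpen.inter (IsOpen.inter hAc.isOpen ?_) ?_) ?_
      · exact isOpen_biInter_finset fun k _ =>
          hAc.isClosed.isOpen_compl.preimage (T.continuous.iterate k)
      · exact hAc.isOpen.preimage (T.continuous.iterate n)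
      · exact isOpen_biInter_finset fun i _ =>
          (isOpen_discrete _).preimage (hf.comp (T.continuous.iterate i))
    · refine ⟨⟨⟨hx, ?_⟩, hr2⟩, ?_⟩
      · refine Set.mem_iInter₂.2 fun k hk => ?_
        rw [Finset.mem_Ico] at hk
        exact hr3 k (by omega) (by omega)
      · exact Set.mem_iInter₂.2 fun i _ => rfl
    · rintro y ⟨⟨⟨hyA, hymid⟩, hyn⟩, hyf⟩
      have hry : retTime (⇑T) A y = n :=
        r_eq T A y n hr1 hyn (fun k hk1 hk2 =>
          Set.mem_iInter₂.1 hymid k (Finset.mem_Ico.2 ⟨hk1, hk2⟩))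
      show A.indicator _ y = A.indicator _ x
      rw [Set.indicator_of_mem hyA, Set.indicator_of_mem hx, Sfun_def, Sfun_def,
        hry, ← hn]
      refine Finset.sum_congr rfl fun i hi => ?_
      have h := Set.mem_iInter₂.1 hyf i hi
      simpa using h
  · refine ⟨Aᶜ, hAc.isClosed.isOpen_compl, hx, fun y hy => ?_⟩
    show A.indicator _ y = A.indicator _ x
    rw [Set.indicator_of_notMem hy, Set.indicator_of_notMem hx]

lemma gfun_cont (T : X ≃ₜ X) (hmin : IsMinimal T) {A : Set X} (hAc : IsClopen A)
    (hAne : A.Nonempty) (f : X → ℤ) (hf : Continuous f) :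
    Continuous (gfun T A f) := by
  have hu := ufun_cont T hmin hAc hAne f hf
  have hbhit : ∀ z : X, ∃ m : ℕ, (⇑T.symm)^[m] z ∈ A := fun z => by
    obtain ⟨m, -, hm⟩ := hitting T.symm (isMinimal_symm T hmin) hAc.isOpen hAne z
    exact ⟨m, hm⟩
  apply IsLocallyConstant.continuous
  rw [IsLocallyConstant.iff_exists_open]
  intro y
  obtain ⟨hbA, hbnot⟩ := b_spec T A y (hbhit y)
  set j := bfun T A y with hj
  refine ⟨(⋂ k ∈ Finset.range j, (⇑T.symm)^[k] ⁻¹' Aᶜ) ∩ ((⇑T.symm)^[j] ⁻¹' A)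
    ∩ ⋂ i ∈ Finset.range j,
        (fun z => ufun T A f ((⇑T.symm)^[j - i] z) - f ((⇑T.symm)^[j - i] z)) ⁻¹'
          {ufun T A f ((⇑T.symm)^[j - i] y) - f ((⇑T.symm)^[j - i] y)},
    ?_, ?_, ?_⟩
  · refine IsOpen.inter (IsOpen.inter ?_ ?_) ?_
    · exact isOpen_biInter_finset fun k _ =>
        hAc.isClosed.isOpen_compl.preimage (T.symm.continuous.iterate k)
    · exact hAc.isOpen.preimage (T.symm.continuous.iterate j)
    · exact isOpen_biInter_finset fun i _ =>
        (isOpen_discrete _).preimage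
          ((hu.comp (T.symm.continuous.iterate (j - i))).sub
            (hf.comp (T.symm.continuous.iterate (j - i))))
  · refine ⟨⟨?_, hbA⟩, Set.mem_iInter₂.2 fun i _ => rfl⟩
    exact Set.mem_iInter₂.2 fun k hk => hbnot k (Finset.mem_range.1 hk)
  · rintro z ⟨⟨hz1, hz2⟩, hz3⟩
    have hbz : bfun T A z = j :=
      b_eq T A z j hz2 (fun k hk =>
        Set.mem_iInter₂.1 hz1 k (Finset.mem_range.2 hk))
    rw [gfun_def, hbz, gfun_def, ← hj]
    refine Finset.sum_congr rfl fun i hi => ?_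
    rw [Finset.mem_range] at hi
    rw [iter_cancel' T i j (le_of_lt hi) z, iter_cancel' T i j (le_of_lt hi) y]
    have h := Set.mem_iInter₂.1 hz3 i (Finset.mem_range.2 hi)
    simpa using h

lemma backward_dir (T : X ≃ₜ X) (hmin : IsMinimal T) (f : X → ℤ) (hf : Continuous f)
    {A : Set X} (hAc : IsClopen A) (hAne : A.Nonempty)
    (hpos : ∀ x ∈ A, 0 < ∑ k ∈ Finset.range (retTime (⇑T) A x), f ((⇑T)^[k] x)) :
    PosClass (⇑T) f := by
  obtain ⟨a, ha⟩ := hAne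
  refine ⟨ufun T A f, ufun_cont T hmin hAc ⟨a, ha⟩ f hf, ?_, ⟨a, ?_⟩,
    gfun T A f, gfun_cont T hmin hAc ⟨a, ha⟩ f hf, fun y => cob_key T hmin hAc ⟨a, ha⟩ f y⟩
  · intro x
    by_cases hx : x ∈ A
    · show 0 ≤ A.indicator _ x
      rw [Set.indicator_of_mem hx]
      exact (hpos x hx).le
    · show 0 ≤ A.indicator _ x
      rw [Set.indicator_of_notMem hx]
  · show A.indicator _ a ≠ 0
    rw [Set.indicator_of_mem ha]
    exact (hpos a ha).ne'

end Stmt5Aux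

theorem stmt5 {X : Type*} [MetricSpace X] [CompactSpace X] [PerfectSpace X]
    [TotallyDisconnectedSpace X]
    (T : X ≃ₜ X) (hmin : IsMinimal T)
    (f : X → ℤ) (hf : Continuous f) :
    PosClass (⇑T) f ↔
      ∃ A : Set X, IsClopen A ∧ A.Nonempty ∧
        ∀ x ∈ A, 0 < ∑ j ∈ Finset.range (retTime (⇑T) A x), f ((⇑T)^[j] x) := by
  constructor
  · intro h
    exact forward_dir T hmin f h
  · rintro ⟨A, hAc, hAne, hpos⟩
    exact backward_dir T hmin f hf hAc hAne hpos
end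

section
/- Let (X,T) be a minimal Cantor system, and let A, B be nonempty disjoint clopen subsets of X with 𝟙_A − 𝟙_B ∈ ∂_T (a T-coboundary). Then there exists a continuous function p : A → ℤ⁺ such that x ↦ T^{p(x)}(x) is a homeomorphism from A onto B. -/
open Set Filter Topology MeasureTheory

private lemma contIter {Y X : Type*} [TopologicalSpace Y] [TopologicalSpace X]
    {T : X → X} (hT : Continuous T) {p : Y → ℕ} (hp : Continuous p)
    {f : Y → X} (hf : Continuous f) : Continuous fun y => T^[p y] (f y) := by
  rw [continuous_iff_continuousAt]
  intro y
  have hev : ∀ᶠ z in 𝓝 y, p z = p y := by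
    have := (hp.isOpen_preimage {p y} (isOpen_discrete _)).mem_nhds rfl
    filter_upwards [this] with z hz using hz
  have hc : ContinuousAt (fun z => T^[p y] (f z)) y :=
    ((hT.iterate (p y)).comp hf).continuousAt
  apply hc.congr
  filter_upwards [hev] with z hz
  rw [hz]

private lemma tailDense {X : Type*} [TopologicalSpace X] [CompactSpace X]
    (T : X ≃ₜ X) (hmin : IsMinimal T) (x : X) {C : Set X} (hC : IsClosed C)
    (h : ∀ n : ℕ, T^[n+1] x ∈ C) : x ∈ C := by
  set Z : ℕ → Set X := fun n => closure ((fun k => T^[k] x) '' Set.Ici n) with hZdef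
  have him : ∀ n, T '' ((fun k => T^[k] x) '' Set.Ici n) = (fun k => T^[k] x) '' Set.Ici (n+1) := by
    intro n
    rw [Set.image_image]
    ext w
    simp only [Set.mem_image, Set.mem_Ici]
    constructor
    · rintro ⟨k, hk, rfl⟩
      exact ⟨k+1, by omega, by rw [Function.iterate_succ_apply']⟩
    · rintro ⟨k, hk, rfl⟩
      refine ⟨k-1, by omega, ?_⟩
      rw [← Function.iterate_succ_apply' T (k-1) x]
      congr 1
      omega
  have hZim : ∀ n, T '' Z n = Z (n+1) := by
    intro n
    rw [hZdef]
    exact (T.image_closure _).trans (by rw [him n])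
  have hZanti : ∀ n, Z (n+1) ⊆ Z n :=
    fun n => closure_mono (Set.image_mono fun k hk => le_trans (Nat.le_succ n) hk)
  have hZcl : ∀ n, IsClosed (Z n) := fun n => isClosed_closure
  have hZne : ∀ n, (Z n).Nonempty := fun n => ⟨T^[n] x, subset_closure ⟨n, le_refl n, rfl⟩⟩
  obtain ⟨z, hz⟩ := IsCompact.nonempty_iInter_of_sequence_nonempty_isCompact_isClosed
    Z hZanti hZne (hZcl 0).isCompact hZcl
  have hzY : ∀ n, z ∈ Z n := by simpa [Set.mem_iInter] using hz
  have hTZ : ∀ (w : X), (∀ n, w ∈ Z n) → ∀ n, T w ∈ Z n := by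
    intro w hw n
    exact hZanti n (by rw [← hZim n]; exact ⟨w, hw n, rfl⟩)
  have hTsZ : ∀ (w : X), (∀ n, w ∈ Z n) → ∀ n, T.symm w ∈ Z n := by
    intro w hw n
    have hw1 := hw (n+1)
    rw [← hZim n] at hw1
    obtain ⟨u, hu, huw⟩ := hw1
    rwa [show T.symm w = u by rw [← huw]; exact T.symm_apply_apply u]
  have hfwd' : ∀ m : ℤ, T ((T.toEquiv ^ m) z) = (T.toEquiv ^ (m+1)) z := by
    intro m
    have h1 : T.toEquiv ^ (m+1) = T.toEquiv * T.toEquiv ^ m := by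
      rw [add_comm, zpow_add, zpow_one]
    rw [h1]; rfl
  have hbwd' : ∀ m : ℤ, T.symm ((T.toEquiv ^ m) z) = (T.toEquiv ^ (m-1)) z := by
    intro m
    have h1 : T.toEquiv ^ (m-1) = (T.toEquiv)⁻¹ * T.toEquiv ^ m := by
      rw [show m - 1 = -1 + m by ring, zpow_add, zpow_neg_one]
    rw [h1]; rfl
  have horb : ∀ (m : ℤ), ∀ n, (T.toEquiv ^ m) z ∈ Z n := by
    intro m
    induction m using Int.induction_on with
    | zero => simpa using hzY
    | succ k ih => intro n; rw [← hfwd' (k:ℤ)]; exact hTZ _ ih n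
    | pred k ih => intro n; rw [show (-(k:ℤ) - 1) = (-(k:ℤ)) - 1 by ring, ← hbwd' (-(k:ℤ))]; exact hTsZ _ ih n
  have hsub : (Set.range fun m : ℤ => (T.toEquiv ^ m) z) ⊆ Z 1 := by
    rintro w ⟨m, rfl⟩; exact horb m 1
  have hdense : Dense (Z 1) := Dense.mono hsub (hmin z)
  have hZ1 : Z 1 = Set.univ := by rw [← (hZcl 1).closure_eq, hdense.closure_eq]
  have hxZ : x ∈ Z 1 := by rw [hZ1]; trivial
  have hZC : Z 1 ⊆ C := by
    apply closure_minimal ?_ hC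
    rintro w ⟨k, hk, rfl⟩
    have hk1 : 1 ≤ k := hk
    have := h (k-1)
    rwa [show k-1+1 = k by omega] at this
  exact hZC hxZ

private lemma minSymm {X : Type*} [TopologicalSpace X] (T : X ≃ₜ X) (hmin : IsMinimal T) :
    IsMinimal T.symm := by
  intro x
  have hr : (Set.range fun n : ℤ => (T.symm.toEquiv ^ n) x)
      = Set.range fun n : ℤ => (T.toEquiv ^ n) x := by
    have key : ∀ n : ℤ, T.symm.toEquiv ^ n = T.toEquiv ^ (-n) := by
      intro n
      rw [zpow_neg, ← inv_zpow]
      rfl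
    ext w
    simp only [Set.mem_range]
    constructor
    · rintro ⟨n, rfl⟩; exact ⟨-n, by rw [key n]⟩
    · rintro ⟨n, rfl⟩; exact ⟨-n, by rw [key (-n), neg_neg]⟩
  rw [hr]
  exact hmin x

theorem stmt12 {X : Type*} [MetricSpace X] [CompactSpace X] [PerfectSpace X]
    [TotallyDisconnectedSpace X]
    (T : X ≃ₜ X) (hmin : IsMinimal T)
    (A B : Set X) (hA : IsClopen A) (hB : IsClopen B)
    (hAne : A.Nonempty) (hBne : B.Nonempty) (hdisj : Disjoint A B)
    (hcob : IsCob (⇑T) (fun x => ind A x - ind B x)) :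
    ∃ p : A → ℕ, Continuous p ∧ (∀ x, 0 < p x) ∧
      ∃ e : A ≃ₜ B, ∀ x : A, (e x : X) = (⇑T)^[p x] (x : X) := by
  classical
  obtain ⟨g, hgc, hgf⟩ := hcob
  have key : ∀ z, g z - g (T z) = (if z ∈ A then 1 else 0) - (if z ∈ B then 1 else 0) := by
    intro z
    rw [← hgf z]
    simp [ind, Set.indicator_apply]
  have hstep2 : ∀ z, -1 ≤ g z - g (T z) := by
    intro z; rw [key z]; split_ifs <;> omega
  have hstep1 : ∀ z, g z - g (T z) ≤ 1 := by
    intro z; rw [key z]; split_ifs <;> omega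
  have hgA : ∀ z, z ∈ A → g z - g (T z) = 1 := by
    intro z hz
    have hnB := Set.disjoint_left.mp hdisj hz
    rw [key z]; simp [hz, hnB]
  have hgB : ∀ z, z ∈ B → g z - g (T z) = -1 := by
    intro z hz
    have hnA := Set.disjoint_right.mp hdisj hz
    rw [key z]; simp [hz, hnA]
  have hposA : ∀ z, 0 < g z - g (T z) → z ∈ A := by
    intro z h; rw [key z] at h; split_ifs at h <;> first | assumption | omega
  have hnegB : ∀ z, g z - g (T z) < 0 → z ∈ B := by
    intro z h; rw [key z] at h; split_ifs at h <;> first | assumption | omega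
  have hLR : ∀ (n : ℕ) (z : X), T.symm^[n] (T^[n] z) = z :=
    fun n z => Function.LeftInverse.iterate T.symm_apply_apply n z
  have hRL : ∀ (n : ℕ) (z : X), T^[n] (T.symm^[n] z) = z :=
    fun n z => Function.LeftInverse.iterate T.apply_symm_apply n z
  -- below lemmas
  have hbelowA : ∀ z, z ∈ A → ∀ k, 1 ≤ k →
      (∀ n, 1 ≤ n → n < k → ¬ g (T^[n+1] z) = g z) → g (T^[k] z) < g z := by
    intro z hz k
    induction k with
    | zero => intro h; exact absurd h (by omega)
    | succ k ih =>
      intro _ hn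
      show g (T^[k+1] z) < g z
      rcases Nat.eq_zero_or_pos k with rfl | hk
      · have := hgA z hz
        simp only [zero_add, Function.iterate_one]
        omega
      · have h1 : g (T^[k] z) < g z := ih hk (fun n a b => hn n a (by omega))
        have h2 : ¬ g (T^[k+1] z) = g z := hn k hk (by omega)
        have h3 : -1 ≤ g (T^[k] z) - g (T (T^[k] z)) := hstep2 _
        rw [show T (T^[k] z) = T^[k+1] z from (Function.iterate_succ_apply' T k z).symm] at h3
        omega
  have hbelowB : ∀ z, z ∈ B → ∀ j,
      (∀ m, 1 ≤ m → m ≤ j → ¬ g (T.symm^[m] z) = g (T z)) → g (T.symm^[j] z) < g (T z) := by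
    intro z hz j
    induction j with
    | zero =>
      intro _
      have := hgB z hz
      simp only [Function.iterate_zero, id_eq]
      omega
    | succ j ih =>
      intro hn
      show g (T.symm^[j+1] z) < g (T z)
      have h1 : g (T.symm^[j] z) < g (T z) := ih (fun m a b => hn m a (by omega))
      have h2 : ¬ g (T.symm^[j+1] z) = g (T z) := hn (j+1) (by omega) le_rfl
      have hw : T (T.symm^[j+1] z) = T.symm^[j] z := by
        rw [Function.iterate_succ_apply' T.symm j z]
        exact T.apply_symm_apply _
      have h3 : g (T.symm^[j+1] z) - g (T (T.symm^[j+1] z)) ≤ 1 := hstep1 _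
      rw [hw] at h3
      omega
  -- nonemptiness
  have hSAne : ∀ z, z ∈ A → {n : ℕ | 1 ≤ n ∧ g (T^[n+1] z) = g z}.Nonempty := by
    intro z hz
    by_contra hne
    have hforall : ∀ n, 1 ≤ n → ¬ g (T^[n+1] z) = g z := by
      intro n h1 h2; exact hne ⟨n, h1, h2⟩
    have hC : ∀ k, 1 ≤ k → g (T^[k] z) < g z :=
      fun k hk => hbelowA z hz k hk (fun n a _ => hforall n a)
    have hcl : IsClosed {w : X | g w < g z} := by
      have : {w : X | g w < g z} = g ⁻¹' (Set.Iio (g z)) := rfl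
      rw [this]
      exact (isClosed_discrete _).preimage hgc
    have hxC : z ∈ {w : X | g w < g z} :=
      tailDense T hmin z hcl (fun n => hC (n+1) (by omega))
    simpa using hxC
  have hSBne : ∀ z, z ∈ B → {m : ℕ | 1 ≤ m ∧ g (T.symm^[m] z) = g (T z)}.Nonempty := by
    intro z hz
    by_contra hne
    have hforall : ∀ m, 1 ≤ m → ¬ g (T.symm^[m] z) = g (T z) := by
      intro m h1 h2; exact hne ⟨m, h1, h2⟩
    have hC : ∀ j, g (T.symm^[j] z) < g (T z) :=
      fun j => hbelowB z hz j (fun m a _ => hforall m a)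
    have hcl : IsClosed {w : X | g w < g (T z)} := by
      have : {w : X | g w < g (T z)} = g ⁻¹' (Set.Iio (g (T z))) := rfl
      rw [this]
      exact (isClosed_discrete _).preimage hgc
    have hxC : T z ∈ {w : X | g w < g (T z)} := by
      apply tailDense T.symm (minSymm T hmin) (T z) hcl
      intro n
      have : T.symm^[n+1] (T z) = T.symm^[n] z := by
        rw [Function.iterate_succ_apply T.symm n (T z), T.symm_apply_apply]
      rw [this]
      exact hC n
    simpa using hxC
  set pfun : X → ℕ := fun z => sInf {n : ℕ | 1 ≤ n ∧ g (T^[n+1] z) = g z} with hpfun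
  set qfun : X → ℕ := fun z => sInf {m : ℕ | 1 ≤ m ∧ g (T.symm^[m] z) = g (T z)} with hqfun
  have hpA : ∀ z, z ∈ A → 1 ≤ pfun z ∧ g (T^[pfun z + 1] z) = g z :=
    fun z hz => Nat.sInf_mem (hSAne z hz)
  have hqB : ∀ z, z ∈ B → 1 ≤ qfun z ∧ g (T.symm^[qfun z] z) = g (T z) :=
    fun z hz => Nat.sInf_mem (hSBne z hz)
  have hpbelow : ∀ z, z ∈ A → ∀ k, 1 ≤ k → k ≤ pfun z → g (T^[k] z) < g z := by
    intro z hz k h1 h2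
    apply hbelowA z hz k h1
    intro n a b heq
    exact Nat.notMem_of_lt_sInf (lt_of_lt_of_le b h2) ⟨a, heq⟩
  have hqbelow : ∀ z, z ∈ B → ∀ j, j < qfun z → g (T.symm^[j] z) < g (T z) := by
    intro z hz j hj
    apply hbelowB z hz j
    intro m a b heq
    exact Nat.notMem_of_lt_sInf (lt_of_le_of_lt b hj) ⟨a, heq⟩
  have hpB : ∀ z, z ∈ A → T^[pfun z] z ∈ B := by
    intro z hz
    obtain ⟨h1, h2⟩ := hpA z hz
    have h3 : g (T^[pfun z] z) < g z := hpbelow z hz _ h1 le_rfl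
    apply hnegB
    have h4 : g (T (T^[pfun z] z)) = g z := by
      rw [← Function.iterate_succ_apply' T (pfun z) z]; exact h2
    omega
  have hqA : ∀ z, z ∈ B → T.symm^[qfun z] z ∈ A := by
    intro z hz
    obtain ⟨h1, h2⟩ := hqB z hz
    have h3 : g (T.symm^[qfun z - 1] z) < g (T z) := hqbelow z hz _ (by omega)
    apply hposA
    have h4 : T (T.symm^[qfun z] z) = T.symm^[qfun z - 1] z := by
      have hq : qfun z = (qfun z - 1) + 1 := by omega
      conv_lhs => rw [hq]
      rw [Function.iterate_succ_apply' T.symm (qfun z - 1) z, T.apply_symm_apply]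
    rw [h4]
    omega
  -- matching
  have hqp : ∀ z, z ∈ A → qfun (T^[pfun z] z) = pfun z := by
    intro z hz
    obtain ⟨h1, h2⟩ := hpA z hz
    have hyB := hpB z hz
    set N := pfun z with hN
    set y := T^[N] z with hy
    have hTy : g (T y) = g z := by
      rw [hy, ← Function.iterate_succ_apply' T N z]; exact h2
    apply le_antisymm
    · apply Nat.sInf_le
      refine ⟨h1, ?_⟩
      rw [show T.symm^[N] y = z by rw [hy, hLR], hTy]
    · by_contra hlt
      push_neg at hlt
      obtain ⟨hq1, hq2⟩ := hqB y hyB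
      set m := qfun y with hm
      have hsplit : y = T^[m] (T^[N-m] z) := by
        rw [hy, ← Function.iterate_add_apply]
        congr 1
        omega
      have hiter : T.symm^[m] y = T^[N-m] z := by
        conv_lhs => rw [hsplit]
        exact hLR m _
      have hlow := hpbelow z hz (N-m) (by omega) (by omega)
      rw [hiter, hTy] at hq2
      omega
  have hpq : ∀ z, z ∈ B → pfun (T.symm^[qfun z] z) = qfun z := by
    intro z hz
    obtain ⟨h1, h2⟩ := hqB z hz
    have hxA := hqA z hz
    set M := qfun z with hM
    set x := T.symm^[M] z with hx
    have hTx : T^[M] x = z := by rw [hx]; exact hRL M z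
    apply le_antisymm
    · apply Nat.sInf_le
      refine ⟨h1, ?_⟩
      have hit : T^[M + 1] x = T z := by
        rw [Function.iterate_succ_apply' T M x, hTx]
      rw [hit]
      exact h2.symm
    · by_contra hlt
      push_neg at hlt
      obtain ⟨hp1, hp2⟩ := hpA x hxA
      set n := pfun x with hn
      have hsplit : x = T.symm^[n+1] (T.symm^[M-(n+1)] z) := by
        rw [hx, ← Function.iterate_add_apply]
        congr 1
        omega
      have hiter : T^[n+1] x = T.symm^[M-(n+1)] z := by
        conv_lhs => rw [hsplit]
        exact hRL (n+1) _
      have hlow := hqbelow z hz (M-(n+1)) (by omega)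
      rw [hiter, h2] at hp2
      omega
  -- clopen conditions
  have hclopenA : ∀ k : ℕ, IsClopen {z : X | g (T^[k+1] z) = g z} := by
    intro k
    have hc : Continuous fun z => g (T^[k+1] z) - g z :=
      (hgc.comp (T.continuous.iterate _)).sub hgc
    have he : {z : X | g (T^[k+1] z) = g z} = (fun z => g (T^[k+1] z) - g z) ⁻¹' {0} := by
      ext z; simp [sub_eq_zero]
    rw [he]
    exact ⟨(isClosed_discrete _).preimage hc, (isOpen_discrete _).preimage hc⟩
  have hclopenB : ∀ k : ℕ, IsClopen {z : X | g (T.symm^[k] z) = g (T z)} := by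
    intro k
    have hc : Continuous fun z => g (T.symm^[k] z) - g (T z) :=
      (hgc.comp (T.symm.continuous.iterate _)).sub (hgc.comp T.continuous)
    have he : {z : X | g (T.symm^[k] z) = g (T z)} = (fun z => g (T.symm^[k] z) - g (T z)) ⁻¹' {0} := by
      ext z; simp [sub_eq_zero]
    rw [he]
    exact ⟨(isClosed_discrete _).preimage hc, (isOpen_discrete _).preimage hc⟩
  have hfiberA : ∀ n : ℕ, IsOpen {a : A | pfun ↑a = n} := by
    intro n
    rcases Nat.eq_zero_or_pos n with rfl | hn
    · have he : {a : A | pfun ↑a = 0} = ∅ := by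
        ext a
        simp only [Set.mem_setOf_eq, Set.mem_empty_iff_false, iff_false]
        intro h
        have := (hpA ↑a a.2).1
        omega
      rw [he]; exact isOpen_empty
    · have heq : {a : A | pfun ↑a = n} = Subtype.val ⁻¹'
          ({z : X | g (T^[n+1] z) = g z} ∩
            ⋂ k ∈ Finset.range n, {z : X | ¬(1 ≤ k ∧ g (T^[k+1] z) = g z)}) := by
        ext a
        simp only [Set.mem_setOf_eq, Set.mem_preimage, Set.mem_inter_iff, Set.mem_iInter,
          Finset.mem_range]
        constructor
        · rintro rfl
          obtain ⟨h1, h2⟩ := Nat.sInf_mem (hSAne ↑a a.2)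
          exact ⟨h2, fun k hk => Nat.notMem_of_lt_sInf hk⟩
        · rintro ⟨h1, h2⟩
          apply le_antisymm
          · exact Nat.sInf_le ⟨hn, h1⟩
          · by_contra hlt
            push_neg at hlt
            exact h2 _ hlt (Nat.sInf_mem (hSAne ↑a a.2))
      rw [heq]
      apply IsOpen.preimage continuous_subtype_val
      apply IsOpen.inter (hclopenA n).2
      apply isOpen_biInter_finset
      intro k hk
      rcases Nat.eq_zero_or_pos k with rfl | hk1
      · have he : {z : X | ¬(1 ≤ 0 ∧ g (T^[0+1] z) = g z)} = Set.univ := by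
          ext z; simp
        rw [he]; exact isOpen_univ
      · have he : {z : X | ¬(1 ≤ k ∧ g (T^[k+1] z) = g z)} = {z : X | g (T^[k+1] z) = g z}ᶜ := by
          ext z
          simp only [Set.mem_setOf_eq, Set.mem_compl_iff]
          have h1k : 1 ≤ k := hk1
          tauto
        rw [he]; exact (hclopenA k).1.isOpen_compl
  have hfiberB : ∀ n : ℕ, IsOpen {b : B | qfun ↑b = n} := by
    intro n
    rcases Nat.eq_zero_or_pos n with rfl | hn
    · have he : {b : B | qfun ↑b = 0} = ∅ := by
        ext b
        simp only [Set.mem_setOf_eq, Set.mem_empty_iff_false, iff_false]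
        intro h
        have := (hqB ↑b b.2).1
        omega
      rw [he]; exact isOpen_empty
    · have heq : {b : B | qfun ↑b = n} = Subtype.val ⁻¹'
          ({z : X | g (T.symm^[n] z) = g (T z)} ∩
            ⋂ k ∈ Finset.range n, {z : X | ¬(1 ≤ k ∧ g (T.symm^[k] z) = g (T z))}) := by
        ext b
        simp only [Set.mem_setOf_eq, Set.mem_preimage, Set.mem_inter_iff, Set.mem_iInter,
          Finset.mem_range]
        constructor
        · rintro rfl
          obtain ⟨h1, h2⟩ := Nat.sInf_mem (hSBne ↑b b.2)
          exact ⟨h2, fun k hk => Nat.notMem_of_lt_sInf hk⟩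
        · rintro ⟨h1, h2⟩
          apply le_antisymm
          · exact Nat.sInf_le ⟨hn, h1⟩
          · by_contra hlt
            push_neg at hlt
            exact h2 _ hlt (Nat.sInf_mem (hSBne ↑b b.2))
      rw [heq]
      apply IsOpen.preimage continuous_subtype_val
      apply IsOpen.inter (hclopenB n).2
      apply isOpen_biInter_finset
      intro k hk
      rcases Nat.eq_zero_or_pos k with rfl | hk1
      · have he : {z : X | ¬(1 ≤ 0 ∧ g (T.symm^[0] z) = g (T z))} = Set.univ := by
          ext z; simp
        rw [he]; exact isOpen_univ
      · have he : {z : X | ¬(1 ≤ k ∧ g (T.symm^[k] z) = g (T z))}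
            = {z : X | g (T.symm^[k] z) = g (T z)}ᶜ := by
          ext z
          simp only [Set.mem_setOf_eq, Set.mem_compl_iff]
          have h1k : 1 ≤ k := hk1
          tauto
        rw [he]; exact (hclopenB k).1.isOpen_compl
  have hpc : Continuous fun a : A => pfun ↑a := by
    apply IsLocallyConstant.continuous
    intro s
    have he : (fun a : A => pfun ↑a) ⁻¹' s = ⋃ n ∈ s, {a : A | pfun ↑a = n} := by
      ext a; simp
    rw [he]
    exact isOpen_biUnion fun n _ => hfiberA n
  have hqc : Continuous fun b : B => qfun ↑b := by
    apply IsLocallyConstant.continuous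
    intro s
    have he : (fun b : B => qfun ↑b) ⁻¹' s = ⋃ n ∈ s, {b : B | qfun ↑b = n} := by
      ext b; simp
    rw [he]
    exact isOpen_biUnion fun n _ => hfiberB n
  refine ⟨fun a => pfun ↑a, hpc, fun a => (hpA ↑a a.2).1, ?_⟩
  refine ⟨⟨⟨fun a => ⟨T^[pfun ↑a] ↑a, hpB ↑a a.2⟩, fun b => ⟨T.symm^[qfun ↑b] ↑b, hqA ↑b b.2⟩,
    ?_, ?_⟩, ?_, ?_⟩, fun a => rfl⟩
  · intro a
    apply Subtype.ext
    show T.symm^[qfun (T^[pfun ↑a] ↑a)] (T^[pfun ↑a] ↑a) = ↑a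
    rw [hqp ↑a a.2]
    exact hLR _ _
  · intro b
    apply Subtype.ext
    show T^[pfun (T.symm^[qfun ↑b] ↑b)] (T.symm^[qfun ↑b] ↑b) = ↑b
    rw [hpq ↑b b.2]
    exact hRL _ _
  · exact Continuous.subtype_mk (contIter T.continuous hpc continuous_subtype_val) _
  · exact Continuous.subtype_mk (contIter T.symm.continuous hqc continuous_subtype_val) _
end

section
/- Suppose α and β are irrational real numbers that are not rationally related. Let G₁ = {(aα + b, aα + cβ + d) ∈ ℝ² : a,b,c,d ∈ ℤ} with the strict coordinatewise ordering (positive cone {(x,y) : x>0 and y>0} ∪ {(0,0)}), let φ : G₁ → ℝ be projection onto the second coordinate, and let G₃ = φ(G₁) with the usual ordering on ℝ. Fix c,d ∈ ℤ with 0 < cβ + d < 1, and set h = cβ + d ∈ G₃ and g = (1,1) ∈ G₁. Then 0 < h < φ(g), but there is no g' ∈ G₁ with φ(g') = h and (0,0) < g' < (1,1). In particular, φ is an order epimorphism that is not exhaustive. -/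
open Set Filter Topology MeasureTheory

/-- Membership in the group `G₁ = {(aα+b, aα+cβ+d) : a,b,c,d ∈ ℤ} ⊆ ℝ²`. -/
def memG1 (α β : ℝ) (v : ℝ × ℝ) : Prop :=
  ∃ a b c d : ℤ, v = ((a : ℝ) * α + b, (a : ℝ) * α + (c : ℝ) * β + d)

theorem stmt17 (α β : ℝ) (hα : Irrational α) (hβ : Irrational β)
    (hind : LinearIndependent ℚ ![(1 : ℝ), α, β])
    (c d : ℤ) (hpos : 0 < (c : ℝ) * β + d) (hlt1 : (c : ℝ) * β + d < 1) :
    (0 < (c : ℝ) * β + d ∧ (c : ℝ) * β + d < ((1 : ℝ), (1 : ℝ)).2) ∧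
    ¬ ∃ g' : ℝ × ℝ, memG1 α β g' ∧ g'.2 = (c : ℝ) * β + d ∧
        (0 < g'.1 ∧ 0 < g'.2) ∧ (g'.1 < 1 ∧ g'.2 < 1) := by
  refine ⟨⟨hpos, hlt1⟩, ?_⟩
  rintro ⟨g', ⟨a, b, c', d', rfl⟩, h2, ⟨hx1, _⟩, hx2, _⟩
  simp only at h2 hx1 hx2
  -- From linear independence: a = 0, c' = c, d' = d
  rw [Fintype.linearIndependent_iff] at hind
  have key := hind ![(d' : ℚ) - d, a, (c' : ℚ) - c] ?_
  · have ha : (a : ℚ) = 0 := key 1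
    have ha0 : a = 0 := by exact_mod_cast ha
    subst ha0
    simp only [Int.cast_zero, zero_mul, zero_add] at hx1 hx2
    have hb0 : 0 < b := by exact_mod_cast hx1
    have hb1 : b < 1 := by exact_mod_cast hx2
    omega
  · have : ((d' : ℝ) - d) * 1 + (a : ℝ) * α + ((c' : ℝ) - c) * β = 0 := by
      have : (a : ℝ) * α + (c' : ℝ) * β + d' = (c : ℝ) * β + d := h2
      ring_nf
      ring_nf at this
      linarith
    simp only [Fin.sum_univ_three]
    simp only [Matrix.cons_val_zero, Matrix.cons_val_one, Matrix.head_cons,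
      Matrix.cons_val_two, Matrix.tail_cons]
    simp only [Rat.smul_def]
    push_cast
    linarith [this]
end
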